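/- Let φ: ℤⁿ → ℤⁿ be a group endomorphism given by an n×n integer matrix D. Then GR(φ) = sp(D), the maximum of the absolute values of the (complex) eigenvalues of D. -/

import Mathlib

open Filter Topology

/-- Word length of `g` with respect to the (symmetrized) generating set `S`. -/
noncomputable def wordLength {G : Type*} [Group G] (S : Set G) (g : G) : ℕ :=
  sInf {n : ℕ | ∃ w : List G, w.length = n ∧ (∀ x ∈ w, x ∈ S ∨ x⁻¹ ∈ S) ∧ w.prod = g}

/-- `L_k(f, S) = max_{s ∈ S} L(f^k(s), S)`. -/
noncomputable def Lk {G : Type*} [Group G] (S : Finset G) (f : G → G) (k : ℕ) : ℕ :=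
  S.sup fun s => wordLength (S : Set G) (f^[k] s)

/-- The growth rate `GR(f) = inf_{k ≥ 1} L_k(f,S)^{1/k}` (which equals
`lim_{k→∞} L_k(f,S)^{1/k}`). -/
noncomputable def GR {G : Type*} [Group G] (S : Finset G) (f : G → G) : ℝ :=
  ⨅ k : ℕ+, (Lk S f k : ℝ) ^ (((k : ℕ) : ℝ))⁻¹

/-- `f` is eventually trivial if some iterate is the trivial endomorphism. -/
def EventuallyTrivial {G : Type*} [Group G] (f : G → G) : Prop :=
  ∃ N : ℕ, 0 < N ∧ ∀ g, f^[N] g = 1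

/-! ### Auxiliary material -/

open Multiplicative Polynomial

section Sec1

variable {G : Type*} [Group G] {S : Set G}

lemma wordLength_le {g : G} {m : ℕ} (w : List G) (hlen : w.length = m)
    (hw : ∀ x ∈ w, x ∈ S ∨ x⁻¹ ∈ S) (hp : w.prod = g) : wordLength S g ≤ m :=
  Nat.sInf_le ⟨w, hlen, hw, hp⟩

lemma exists_word (hS : Subgroup.closure S = ⊤) (g : G) :
    ∃ w : List G, w.length = wordLength S g ∧ (∀ x ∈ w, x ∈ S ∨ x⁻¹ ∈ S) ∧ w.prod = g := by
  have hg : g ∈ (Subgroup.closure S).toSubmonoid := by rw [hS]; trivial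
  rw [Subgroup.closure_toSubmonoid] at hg
  obtain ⟨l, hl, hp⟩ := Submonoid.exists_list_of_mem_closure hg
  have hmem : l.length ∈ {n : ℕ | ∃ w : List G,
      w.length = n ∧ (∀ x ∈ w, x ∈ S ∨ x⁻¹ ∈ S) ∧ w.prod = g} := by
    refine ⟨l, rfl, fun x hx => ?_, hp⟩
    rcases Set.mem_union _ _ _ |>.mp (hl x hx) with h | h
    · exact Or.inl h
    · exact Or.inr (Set.mem_inv.mp h)
  have := Nat.sInf_mem ⟨l.length, hmem⟩
  exact this

@[simp] lemma wordLength_one : wordLength S (1 : G) = 0 :=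
  Nat.le_zero.mp (wordLength_le [] rfl (by simp) (by simp))

lemma eq_one_of_wordLength_eq_zero (hS : Subgroup.closure S = ⊤) {g : G}
    (h : wordLength S g = 0) : g = 1 := by
  obtain ⟨w, hlen, -, hp⟩ := exists_word hS g
  rw [h, List.length_eq_zero_iff] at hlen
  rw [← hp, hlen, List.prod_nil]

lemma wordLength_mul_le (hS : Subgroup.closure S = ⊤) (g h : G) :
    wordLength S (g * h) ≤ wordLength S g + wordLength S h := by
  obtain ⟨w1, h1, hw1, hp1⟩ := exists_word hS g
  obtain ⟨w2, h2, hw2, hp2⟩ := exists_word hS h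
  refine wordLength_le (w1 ++ w2) (by simp [h1, h2]) ?_ (by simp [hp1, hp2])
  intro x hx
  rcases List.mem_append.mp hx with h | h
  · exact hw1 x h
  · exact hw2 x h

lemma wordLength_inv (hS : Subgroup.closure S = ⊤) (g : G) :
    wordLength S g⁻¹ = wordLength S g := by
  have key : ∀ a : G, wordLength S a⁻¹ ≤ wordLength S a := by
    intro a
    obtain ⟨w, hlen, hw, hp⟩ := exists_word hS a
    refine wordLength_le ((w.map fun x => x⁻¹).reverse) (by simp [hlen]) ?_ ?_
    · intro x hx
      simp only [List.mem_reverse, List.mem_map] at hx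
      obtain ⟨y, hy, rfl⟩ := hx
      rcases hw y hy with h | h
      · exact Or.inr (by simpa using h)
      · exact Or.inl h
    · rw [← List.prod_inv_reverse, hp]
  refine le_antisymm (key g) ?_
  have := key g⁻¹
  simpa using this

lemma wordLength_pow_le (hS : Subgroup.closure S = ⊤) (g : G) (m : ℕ) :
    wordLength S (g ^ m) ≤ m * wordLength S g := by
  induction m with
  | zero => simp
  | succ k ih =>
    rw [pow_succ]
    calc wordLength S (g ^ k * g) ≤ wordLength S (g ^ k) + wordLength S g :=
          wordLength_mul_le hS _ _
      _ ≤ k * wordLength S g + wordLength S g := by omega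
      _ = (k + 1) * wordLength S g := by ring

lemma wordLength_zpow_le (hS : Subgroup.closure S = ⊤) (g : G) (m : ℤ) :
    wordLength S (g ^ m) ≤ m.natAbs * wordLength S g := by
  rcases Int.natAbs_eq m with h | h
  · rw [h, zpow_natCast]; exact wordLength_pow_le hS g m.natAbs
  · rw [h, zpow_neg, zpow_natCast, wordLength_inv hS, Int.natAbs_neg, Int.natAbs_natCast]
    exact wordLength_pow_le hS g m.natAbs

lemma wordLength_listProd_le (hS : Subgroup.closure S = ⊤) (w : List G) :
    wordLength S w.prod ≤ (w.map (wordLength S)).sum := by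
  induction w with
  | nil => simp [wordLength_one]
  | cons x l ih =>
    rw [List.prod_cons, List.map_cons, List.sum_cons]
    exact (wordLength_mul_le hS x l.prod).trans (by omega)

lemma wordLength_finsetProd_le {H : Type*} [CommGroup H] {T : Set H}
    (hT : Subgroup.closure T = ⊤) {ι : Type*} (t : Finset ι) (f : ι → H) :
    wordLength T (∏ i ∈ t, f i) ≤ ∑ i ∈ t, wordLength T (f i) := by
  induction t using Finset.cons_induction with
  | empty => simp [wordLength_one]
  | cons a s ha ih =>
    rw [Finset.prod_cons, Finset.sum_cons]
    exact (wordLength_mul_le hT _ _).trans (by omega)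

end Sec1

section Sec2

variable {n : ℕ}

/-- ℓ∞ norm (as a natural number) of an integer vector. -/
def vnorm {n : ℕ} (v : Fin n → ℤ) : ℕ := Finset.univ.sup fun i => (v i).natAbs

/-- max-row-sum norm (as a natural number) of an integer matrix. -/
def mnorm {n : ℕ} (A : Matrix (Fin n) (Fin n) ℤ) : ℕ :=
  Finset.univ.sup fun i => ∑ j, (A i j).natAbs

lemma natAbs_le_vnorm (v : Fin n → ℤ) (i : Fin n) : (v i).natAbs ≤ vnorm v :=
  Finset.le_sup (f := fun i => (v i).natAbs) (Finset.mem_univ i)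

lemma vnorm_add_le (u v : Fin n → ℤ) : vnorm (u + v) ≤ vnorm u + vnorm v := by
  refine Finset.sup_le fun i _ => ?_
  calc ((u + v) i).natAbs ≤ (u i).natAbs + (v i).natAbs := Int.natAbs_add_le _ _
    _ ≤ vnorm u + vnorm v := add_le_add (natAbs_le_vnorm u i) (natAbs_le_vnorm v i)

@[simp] lemma vnorm_neg (v : Fin n → ℤ) : vnorm (-v) = vnorm v := by
  unfold vnorm; simp

@[simp] lemma vnorm_zero : vnorm (0 : Fin n → ℤ) = 0 := by
  unfold vnorm; simp

lemma vnorm_eq_zero {v : Fin n → ℤ} (h : vnorm v = 0) : v = 0 := by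
  funext i
  have := natAbs_le_vnorm v i
  rw [h, Nat.le_zero, Int.natAbs_eq_zero] at this
  simpa using this

lemma rowsum_le_mnorm (A : Matrix (Fin n) (Fin n) ℤ) (i : Fin n) :
    ∑ j, (A i j).natAbs ≤ mnorm A :=
  Finset.le_sup (f := fun i => ∑ j, (A i j).natAbs) (Finset.mem_univ i)

lemma mnorm_eq_zero {A : Matrix (Fin n) (Fin n) ℤ} (h : mnorm A = 0) : A = 0 := by
  ext i j
  have h1 := rowsum_le_mnorm A i
  rw [h, Nat.le_zero, Finset.sum_eq_zero_iff] at h1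
  simpa [Int.natAbs_eq_zero] using h1 j (Finset.mem_univ j)

lemma vnorm_mulVec_le (A : Matrix (Fin n) (Fin n) ℤ) (v : Fin n → ℤ) :
    vnorm (A.mulVec v) ≤ mnorm A * vnorm v := by
  refine Finset.sup_le fun i _ => ?_
  calc (A.mulVec v i).natAbs = (∑ j, A i j * v j).natAbs := by rfl
    _ ≤ ∑ j, (A i j * v j).natAbs := by
        simpa using nat_abs_sum_le Finset.univ (fun j => A i j * v j)
    _ = ∑ j, (A i j).natAbs * (v j).natAbs := by simp [Int.natAbs_mul]
    _ ≤ ∑ j, (A i j).natAbs * vnorm v := by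
        exact Finset.sum_le_sum fun j _ => Nat.mul_le_mul_left _ (natAbs_le_vnorm v j)
    _ = (∑ j, (A i j).natAbs) * vnorm v := by rw [Finset.sum_mul]
    _ ≤ mnorm A * vnorm v := Nat.mul_le_mul_right _ (rowsum_le_mnorm A i)

lemma entry_le_vnorm_mulVec_single (A : Matrix (Fin n) (Fin n) ℤ) (i j : Fin n) :
    (A i j).natAbs ≤ vnorm (A.mulVec (Pi.single j 1)) := by
  have : A.mulVec (Pi.single j 1) i = A i j := by
    simp [Matrix.mulVec_single]
  rw [← this]
  exact natAbs_le_vnorm _ i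

lemma mnorm_le_sum (A : Matrix (Fin n) (Fin n) ℤ) :
    mnorm A ≤ ∑ j, vnorm (A.mulVec (Pi.single j 1)) := by
  refine Finset.sup_le fun i _ => ?_
  exact Finset.sum_le_sum fun j _ => entry_le_vnorm_mulVec_single A i j

end Sec2

section Sec3

variable {n : ℕ} (S : Finset (Multiplicative (Fin n → ℤ)))
  (hS : Subgroup.closure (S : Set (Multiplicative (Fin n → ℤ))) = ⊤)

local notation "G" => Multiplicative (Fin n → ℤ)

/-- The endomorphism of `Multiplicative (ℤⁿ)` defined by a matrix, as a `MonoidHom`. -/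
def phiHom (A : Matrix (Fin n) (Fin n) ℤ) :
    Multiplicative (Fin n → ℤ) →* Multiplicative (Fin n → ℤ) where
  toFun x := ofAdd (A.mulVec x.toAdd)
  map_one' := by
    simp only [toAdd_one, Matrix.mulVec_zero, ofAdd_zero]
  map_mul' x y := by
    simp only [toAdd_mul, Matrix.mulVec_add, ofAdd_add]

lemma phi_iterate (A : Matrix (Fin n) (Fin n) ℤ) (k : ℕ) (x : Multiplicative (Fin n → ℤ)) :
    (fun x : Multiplicative (Fin n → ℤ) => ofAdd (A.mulVec x.toAdd))^[k] x
      = ofAdd ((A ^ k).mulVec x.toAdd) := by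
  induction k generalizing x with
  | zero => simp [Matrix.one_mulVec]
  | succ k ih =>
    rw [Function.iterate_succ_apply', ih]
    show ofAdd (A.mulVec ((A ^ k).mulVec x.toAdd)) = _
    rw [Matrix.mulVec_mulVec, ← pow_succ']

/-- The max vnorm of a generator. -/
noncomputable def Bc : ℕ := S.sup fun s => vnorm s.toAdd

/-- The max word length of a standard basis vector. -/
noncomputable def Cc : ℕ :=
  Finset.univ.sup fun i : Fin n => wordLength (S : Set (Multiplicative (Fin n → ℤ)))
    (ofAdd (Pi.single i 1))

lemma vnorm_letter_le {x : Multiplicative (Fin n → ℤ)}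
    (hx : x ∈ (S : Set G) ∨ x⁻¹ ∈ (S : Set G)) : vnorm x.toAdd ≤ Bc S := by
  rcases hx with h | h
  · exact Finset.le_sup (f := fun s : G => vnorm s.toAdd) h
  · have : vnorm x⁻¹.toAdd ≤ Bc S := Finset.le_sup (f := fun s : G => vnorm s.toAdd) h
    rwa [toAdd_inv, vnorm_neg] at this

lemma vnorm_listProd_le (w : List G) (hw : ∀ x ∈ w, x ∈ (S : Set G) ∨ x⁻¹ ∈ (S : Set G)) :
    vnorm (w.prod).toAdd ≤ w.length * Bc S := by
  induction w with
  | nil => simp [vnorm_zero]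
  | cons x l ih =>
    rw [List.prod_cons, toAdd_mul]
    have h1 : vnorm x.toAdd ≤ Bc S := vnorm_letter_le S (hw x (by simp))
    have h2 := ih fun y hy => hw y (by simp [hy])
    calc vnorm (x.toAdd + (l.prod).toAdd) ≤ vnorm x.toAdd + vnorm (l.prod).toAdd :=
          vnorm_add_le _ _
      _ ≤ Bc S + l.length * Bc S := add_le_add h1 h2
      _ = (x :: l).length * Bc S := by simp [List.length_cons]; ring

include hS in
lemma vnorm_toAdd_le (g : Multiplicative (Fin n → ℤ)) :
    vnorm g.toAdd ≤ wordLength (S : Set G) g * Bc S := by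
  obtain ⟨w, hlen, hw, hp⟩ := exists_word hS g
  calc vnorm g.toAdd = vnorm (w.prod).toAdd := by rw [hp]
    _ ≤ w.length * Bc S := vnorm_listProd_le S w hw
    _ = wordLength (S : Set G) g * Bc S := by rw [hlen]

lemma toAdd_finsetProd {ι : Type*} (t : Finset ι) (f : ι → G) :
    (∏ i ∈ t, f i).toAdd = ∑ i ∈ t, (f i).toAdd := by
  induction t using Finset.cons_induction with
  | empty => simp
  | cons a s ha ih => rw [Finset.prod_cons, Finset.sum_cons, toAdd_mul, ih]

include hS in
lemma wordLength_ofAdd_le (v : Fin n → ℤ) :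
    wordLength (S : Set G) (ofAdd v) ≤ n * Cc S * vnorm v := by
  have hv : ofAdd v = ∏ i : Fin n, ofAdd (Pi.single i 1 : Fin n → ℤ) ^ (v i) := by
    apply Multiplicative.toAdd.injective
    rw [toAdd_finsetProd]
    simp only [toAdd_zpow, toAdd_ofAdd]
    rw [← Finset.univ_sum_single v]
    exact Finset.sum_congr rfl fun i _ => by
      rw [← Pi.single_smul, smul_eq_mul, mul_one, Finset.univ_sum_single]
  calc wordLength (S : Set G) (ofAdd v)
      ≤ ∑ i : Fin n, wordLength (S : Set G) (ofAdd (Pi.single i 1 : Fin n → ℤ) ^ (v i)) := by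
        rw [hv]; exact wordLength_finsetProd_le hS Finset.univ _
    _ ≤ ∑ i : Fin n, (v i).natAbs * Cc S := by
        refine Finset.sum_le_sum fun i _ => ?_
        refine (wordLength_zpow_le hS _ _).trans ?_
        exact Nat.mul_le_mul_left _
          (Finset.le_sup (f := fun i : Fin n => wordLength (S : Set G)
            (ofAdd (Pi.single i 1 : Fin n → ℤ))) (Finset.mem_univ i))
    _ ≤ ∑ _i : Fin n, vnorm v * Cc S := by
        exact Finset.sum_le_sum fun i _ => Nat.mul_le_mul_right _ (natAbs_le_vnorm v i)
    _ = n * Cc S * vnorm v := by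
        rw [Finset.sum_const, Finset.card_univ, Fintype.card_fin, smul_eq_mul]; ring

lemma vnorm_mulVec_letter_le (A : Matrix (Fin n) (Fin n) ℤ) {x : Multiplicative (Fin n → ℤ)}
    (hx : x ∈ (S : Set G) ∨ x⁻¹ ∈ (S : Set G)) :
    vnorm (A.mulVec x.toAdd) ≤ S.sup fun s => vnorm (A.mulVec s.toAdd) := by
  rcases hx with h | h
  · exact Finset.le_sup (f := fun s : G => vnorm (A.mulVec s.toAdd)) h
  · have : vnorm (A.mulVec x⁻¹.toAdd) ≤ S.sup fun s => vnorm (A.mulVec s.toAdd) :=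
      Finset.le_sup (f := fun s : G => vnorm (A.mulVec s.toAdd)) h
    rwa [toAdd_inv, Matrix.mulVec_neg, vnorm_neg] at this

lemma vnorm_mulVec_listProd_le (A : Matrix (Fin n) (Fin n) ℤ) (w : List G)
    (hw : ∀ x ∈ w, x ∈ (S : Set G) ∨ x⁻¹ ∈ (S : Set G)) :
    vnorm (A.mulVec (w.prod).toAdd)
      ≤ w.length * S.sup fun s => vnorm (A.mulVec s.toAdd) := by
  induction w with
  | nil => simp [vnorm_zero, Matrix.mulVec_zero]
  | cons x l ih =>
    rw [List.prod_cons, toAdd_mul, Matrix.mulVec_add]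
    have h1 := vnorm_mulVec_letter_le S A (hw x (by simp))
    have h2 := ih fun y hy => hw y (by simp [hy])
    calc vnorm (A.mulVec x.toAdd + A.mulVec (l.prod).toAdd)
        ≤ vnorm (A.mulVec x.toAdd) + vnorm (A.mulVec (l.prod).toAdd) := vnorm_add_le _ _
      _ ≤ (S.sup fun s => vnorm (A.mulVec s.toAdd))
          + l.length * S.sup fun s => vnorm (A.mulVec s.toAdd) := add_le_add h1 h2
      _ = (x :: l).length * S.sup fun s => vnorm (A.mulVec s.toAdd) := by
          simp [List.length_cons]; ring

include hS in
lemma vnorm_mulVec_toAdd_le (A : Matrix (Fin n) (Fin n) ℤ) (g : Multiplicative (Fin n → ℤ)) :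
    vnorm (A.mulVec g.toAdd)
      ≤ wordLength (S : Set G) g * S.sup fun s => vnorm (A.mulVec s.toAdd) := by
  obtain ⟨w, hlen, hw, hp⟩ := exists_word hS g
  calc vnorm (A.mulVec g.toAdd) = vnorm (A.mulVec (w.prod).toAdd) := by rw [hp]
    _ ≤ w.length * S.sup fun s => vnorm (A.mulVec s.toAdd) := vnorm_mulVec_listProd_le S A w hw
    _ = wordLength (S : Set G) g * S.sup fun s => vnorm (A.mulVec s.toAdd) := by rw [hlen]

include hS in
lemma matrix_eq_zero_of_S (A : Matrix (Fin n) (Fin n) ℤ)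
    (h : ∀ s ∈ S, A.mulVec s.toAdd = 0) : A = 0 := by
  have hsup : (S.sup fun s : G => vnorm (A.mulVec s.toAdd)) = 0 := by
    refine Nat.le_zero.mp (Finset.sup_le fun s hs => ?_)
    rw [h s hs, vnorm_zero]
  have hv : ∀ v : Fin n → ℤ, A.mulVec v = 0 := by
    intro v
    have h2 := vnorm_mulVec_toAdd_le S hS A (ofAdd v)
    rw [hsup, Nat.mul_zero] at h2
    exact vnorm_eq_zero (Nat.le_zero.mp h2)
  ext i j
  have h3 := congrFun (hv (Pi.single j 1)) i
  rw [Matrix.mulVec_single] at h3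
  simpa using h3

include hS in
lemma Lk_le_mnorm (D : Matrix (Fin n) (Fin n) ℤ) (k : ℕ) :
    Lk S (fun x => ofAdd (D.mulVec x.toAdd)) k ≤ n * Cc S * Bc S * mnorm (D ^ k) := by
  refine Finset.sup_le fun s hs => ?_
  rw [phi_iterate]
  calc wordLength (S : Set G) (ofAdd ((D ^ k).mulVec s.toAdd))
      ≤ n * Cc S * vnorm ((D ^ k).mulVec s.toAdd) := wordLength_ofAdd_le S hS _
    _ ≤ n * Cc S * (mnorm (D ^ k) * vnorm s.toAdd) :=
        Nat.mul_le_mul_left _ (vnorm_mulVec_le _ _)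
    _ ≤ n * Cc S * (mnorm (D ^ k) * Bc S) :=
        Nat.mul_le_mul_left _ (Nat.mul_le_mul_left _
          (Finset.le_sup (f := fun s : G => vnorm s.toAdd) hs))
    _ = n * Cc S * Bc S * mnorm (D ^ k) := by ring

include hS in
lemma mnorm_le_Lk (D : Matrix (Fin n) (Fin n) ℤ) (k : ℕ) :
    mnorm (D ^ k) ≤ n * Cc S * Bc S * Lk S (fun x => ofAdd (D.mulVec x.toAdd)) k := by
  have hsup : (S.sup fun s : G => vnorm ((D ^ k).mulVec s.toAdd))
      ≤ Lk S (fun x => ofAdd (D.mulVec x.toAdd)) k * Bc S := by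
    refine Finset.sup_le fun s hs => ?_
    have h1 := vnorm_toAdd_le S hS ((fun x : G => ofAdd (D.mulVec x.toAdd))^[k] s)
    rw [phi_iterate] at h1
    refine h1.trans (Nat.mul_le_mul_right _ ?_)
    have h2 : wordLength (S : Set G) ((fun x : G => ofAdd (D.mulVec x.toAdd))^[k] s)
        ≤ Lk S (fun x => ofAdd (D.mulVec x.toAdd)) k :=
      Finset.le_sup (f := fun s : G =>
        wordLength (S : Set G) ((fun x : G => ofAdd (D.mulVec x.toAdd))^[k] s)) hs
    rw [phi_iterate] at h2
    exact h2
  calc mnorm (D ^ k) ≤ ∑ j, vnorm ((D ^ k).mulVec (Pi.single j 1)) := mnorm_le_sum _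
    _ ≤ ∑ _j : Fin n, Cc S * (S.sup fun s : G => vnorm ((D ^ k).mulVec s.toAdd)) := by
        refine Finset.sum_le_sum fun j _ => ?_
        have := vnorm_mulVec_toAdd_le S hS (D ^ k) (ofAdd (Pi.single j 1))
        refine this.trans (Nat.mul_le_mul_right _ ?_)
        exact Finset.le_sup (f := fun i : Fin n => wordLength (S : Set G)
          (ofAdd (Pi.single i 1 : Fin n → ℤ))) (Finset.mem_univ j)
    _ ≤ ∑ _j : Fin n, Cc S * (Lk S (fun x => ofAdd (D.mulVec x.toAdd)) k * Bc S) :=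
        Finset.sum_le_sum fun j _ => Nat.mul_le_mul_left _ hsup
    _ = n * Cc S * Bc S * Lk S (fun x => ofAdd (D.mulVec x.toAdd)) k := by
        rw [Finset.sum_const, Finset.card_univ, Fintype.card_fin, smul_eq_mul]; ring

include hS in
lemma Lk_submul (D : Matrix (Fin n) (Fin n) ℤ) (k l : ℕ) :
    Lk S (fun x => ofAdd (D.mulVec x.toAdd)) (k + l)
      ≤ Lk S (fun x => ofAdd (D.mulVec x.toAdd)) k
        * Lk S (fun x => ofAdd (D.mulVec x.toAdd)) l := by
  set φ := fun x : G => ofAdd (D.mulVec x.toAdd) with hφ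
  have hfun : ∀ l : ℕ, φ^[l] = ⇑(phiHom (D ^ l)) := fun l =>
    funext fun x => phi_iterate D l x
  refine Finset.sup_le fun s hs => ?_
  have h1 : φ^[k + l] s = φ^[l] (φ^[k] s) := by
    rw [add_comm, Function.iterate_add_apply]
  obtain ⟨w, hlen, hw, hp⟩ := exists_word hS (φ^[k] s)
  have h2 : φ^[l] (φ^[k] s) = (w.map (φ^[l])).prod := by
    rw [← hp, hfun l, MonoidHom.map_list_prod]
  have hletter : ∀ y ∈ w.map (φ^[l]), wordLength (S : Set G) y ≤ Lk S φ l := by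
    intro y hy
    obtain ⟨x, hx, rfl⟩ := List.mem_map.mp hy
    rcases hw x hx with h | h
    · exact Finset.le_sup (f := fun s : G => wordLength (S : Set G) (φ^[l] s)) h
    · have hinv : φ^[l] x = (φ^[l] x⁻¹)⁻¹ := by
        rw [hfun l, ← map_inv, inv_inv]
      rw [hinv, wordLength_inv hS]
      exact Finset.le_sup (f := fun s : G => wordLength (S : Set G) (φ^[l] s)) h
  rw [h1, h2]
  calc wordLength (S : Set G) (w.map (φ^[l])).prod
      ≤ ((w.map (φ^[l])).map (wordLength (S : Set G))).sum := wordLength_listProd_le hS _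
    _ ≤ ((w.map (φ^[l])).map (wordLength (S : Set G))).length * Lk S φ l := by
        refine (List.sum_le_card_nsmul _ _ ?_).trans (by rw [smul_eq_mul])
        intro x hx
        obtain ⟨y, hy, rfl⟩ := List.mem_map.mp hx
        exact hletter y hy
    _ = wordLength (S : Set G) (φ^[k] s) * Lk S φ l := by
        rw [List.length_map, List.length_map, hlen]
    _ ≤ Lk S φ k * Lk S φ l := by
        refine Nat.mul_le_mul_right _ ?_
        exact Finset.le_sup (f := fun s : G => wordLength (S : Set G) (φ^[k] s)) hs

end Sec3

section Sec4

attribute [local instance] Matrix.linftyOpNormedRing Matrix.linftyOpNormedAlgebra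

variable {n : ℕ}

lemma charpoly_isRoot_iff (M : Matrix (Fin n) (Fin n) ℂ) (μ : ℂ) :
    M.charpoly.IsRoot μ ↔ μ ∈ spectrum ℂ M := by
  have key : M.charpoly.eval μ = ((algebraMap ℂ (Matrix (Fin n) (Fin n) ℂ)) μ - M).det := by
    rw [Matrix.charpoly, ← Polynomial.coe_evalRingHom, RingHom.map_det]
    congr 1
    ext i j
    by_cases h : i = j <;>
      simp [Matrix.charmatrix_apply, Matrix.algebraMap_matrix_apply, Matrix.diagonal_apply,
        Matrix.one_apply, h]
  rw [Polynomial.IsRoot, key, spectrum.mem_iff]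
  constructor
  · intro h hu
    rw [Matrix.isUnit_iff_isUnit_det, h] at hu
    exact absurd hu (by simp)
  · intro h
    by_contra hdet
    exact h ((Matrix.isUnit_iff_isUnit_det _).mpr (isUnit_iff_ne_zero.mpr hdet))

lemma nnnorm_intMatrix_map (A : Matrix (Fin n) (Fin n) ℤ) :
    ‖A.map (fun i : ℤ => (i : ℂ))‖₊ = ((mnorm A : ℕ) : NNReal) := by
  unfold mnorm
  rw [Matrix.linfty_opNNNorm_def]
  rw [Finset.comp_sup_eq_sup_comp (Nat.cast : ℕ → NNReal) (fun x y => by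
    simp [Nat.cast_max]) (by simp)]
  congr 1
  funext i
  rw [Function.comp_apply, Nat.cast_sum]
  congr 1
  funext j
  ext
  simp [Matrix.map_apply, Nat.cast_natAbs, Complex.norm_intCast, Int.norm_eq_abs]

lemma map_pow_comm (D : Matrix (Fin n) (Fin n) ℤ) (k : ℕ) :
    (D.map (fun i : ℤ => (i : ℂ))) ^ k = (D ^ k).map (fun i : ℤ => (i : ℂ)) := by
  have h : ∀ A : Matrix (Fin n) (Fin n) ℤ, A.map (fun i : ℤ => (i : ℂ))
      = (Int.castRingHom ℂ).mapMatrix A := fun A => rfl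
  rw [h, h, ← map_pow]

lemma exists_max_spectrum (hn : 0 < n) (M : Matrix (Fin n) (Fin n) ℂ) :
    ∃ μ0 ∈ spectrum ℂ M, (∀ μ ∈ spectrum ℂ M, ‖μ‖ ≤ ‖μ0‖) ∧
      spectralRadius ℂ M = (‖μ0‖₊ : ENNReal) := by
  haveI : Nonempty (Fin n) := Fin.pos_iff_nonempty.mp hn
  haveI : Nontrivial (Matrix (Fin n) (Fin n) ℂ) := Matrix.nonempty
  haveI : CompleteSpace (Matrix (Fin n) (Fin n) ℂ) := FiniteDimensional.complete ℂ _
  have hfin : (spectrum ℂ M).Finite := M.finite_spectrum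
  have hne : (spectrum ℂ M).Nonempty := spectrum.nonempty M
  have hne' : hfin.toFinset.Nonempty := by
    rwa [Set.Finite.toFinset_nonempty]
  obtain ⟨μ0, hmem, hmax⟩ := hfin.toFinset.exists_max_image (fun μ : ℂ => ‖μ‖) hne'
  rw [Set.Finite.mem_toFinset] at hmem
  refine ⟨μ0, hmem, fun μ hμ => hmax μ (hfin.mem_toFinset.mpr hμ), ?_⟩
  apply le_antisymm
  · refine iSup₂_le fun μ hμ => ?_
    have : ‖μ‖₊ ≤ ‖μ0‖₊ := by
      have := hmax μ (hfin.mem_toFinset.mpr hμ)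
      rwa [← coe_nnnorm, ← coe_nnnorm,
        NNReal.coe_le_coe] at this
    exact_mod_cast ENNReal.coe_le_coe.mpr this
  · exact le_iSup₂ (f := fun (k : ℂ) (_ : k ∈ spectrum ℂ M) => (‖k‖₊ : ENNReal)) μ0 hmem

end Sec4

attribute [local instance] Matrix.linftyOpNormedRing Matrix.linftyOpNormedAlgebra

/-- For an endomorphism of `ℤⁿ` given by an integer matrix `D`,
`GR(φ) = sp(D)`, the maximum of the absolute values of the complex eigenvalues of `D`. -/
theorem GR_zn_eq_spectralRadius (n : ℕ) (D : Matrix (Fin n) (Fin n) ℤ)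
    (S : Finset (Multiplicative (Fin n → ℤ)))
    (hS : Subgroup.closure (S : Set (Multiplicative (Fin n → ℤ))) = ⊤) :
    GR S (fun x => Multiplicative.ofAdd (D.mulVec (Multiplicative.toAdd x))) =
      sSup {r : ℝ | ∃ μ : ℂ,
        ((D.map (fun i => (i : ℂ))).charpoly.IsRoot μ) ∧ r = ‖μ‖} := by
  classical
  have hGR0 : ∀ k : ℕ+,
      (0:ℝ) ≤ (Lk S (fun x => ofAdd (D.mulVec x.toAdd)) k : ℝ) ^ (((k:ℕ):ℝ))⁻¹ :=
    fun k => Real.rpow_nonneg (Nat.cast_nonneg _) _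
  have hbddGR : BddBelow (Set.range fun k : ℕ+ =>
      (Lk S (fun x => ofAdd (D.mulVec x.toAdd)) k : ℝ) ^ (((k:ℕ):ℝ))⁻¹) := by
    refine ⟨0, ?_⟩
    rintro x ⟨k, rfl⟩
    exact hGR0 k
  by_cases hnil : ∃ N : ℕ, 0 < N ∧ D ^ N = 0
  · -- nilpotent case : both sides are zero
    obtain ⟨N, hN, hDN⟩ := hnil
    have hLkN : Lk S (fun x => ofAdd (D.mulVec x.toAdd)) N = 0 := by
      refine Nat.le_zero.mp (Finset.sup_le fun s hs => ?_)
      rw [phi_iterate, hDN, Matrix.zero_mulVec]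
      exact le_of_eq wordLength_one
    have hGRle : GR S (fun x => ofAdd (D.mulVec x.toAdd)) ≤ 0 := by
      have h1 : GR S (fun x => ofAdd (D.mulVec x.toAdd))
          ≤ (Lk S (fun x => ofAdd (D.mulVec x.toAdd)) N : ℝ) ^ ((N:ℝ))⁻¹ :=
        ciInf_le hbddGR (⟨N, hN⟩ : ℕ+)
      rw [hLkN] at h1
      rwa [Nat.cast_zero, Real.zero_rpow (by
        simp only [ne_eq, inv_eq_zero, Nat.cast_eq_zero]
        exact Nat.pos_iff_ne_zero.mp hN)] at h1
    have hGR : GR S (fun x => ofAdd (D.mulVec x.toAdd)) = 0 :=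
      le_antisymm hGRle (le_ciInf hGR0)
    rw [hGR]
    rcases Nat.eq_zero_or_pos n with hn | hn
    · subst hn
      have hempty : {r : ℝ | ∃ μ : ℂ,
          ((D.map (fun i => (i : ℂ))).charpoly.IsRoot μ) ∧ r = ‖μ‖} = ∅ := by
        ext r
        simp only [Set.mem_setOf_eq, Set.mem_empty_iff_false, iff_false, not_exists]
        rintro μ ⟨hroot, -⟩
        have h1 : (D.map (fun i => (i : ℂ))).charpoly = 1 := by
          rw [Matrix.charpoly, Matrix.det_isEmpty]
        rw [h1] at hroot
        simpa [Polynomial.IsRoot] using hroot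
      rw [hempty, Real.sSup_empty]
    · haveI : Nonempty (Fin n) := Fin.pos_iff_nonempty.mp hn
      haveI : Nontrivial (Matrix (Fin n) (Fin n) ℂ) := Matrix.nonempty
      have hsub : ∀ μ : ℂ, (D.map (fun i => (i : ℂ))).charpoly.IsRoot μ → μ = 0 := by
        intro μ hroot
        have hmem := (charpoly_isRoot_iff _ μ).mp hroot
        have h2 : μ ^ N ∈ spectrum ℂ
            ((Polynomial.aeval (D.map (fun i : ℤ => (i : ℂ)))) (Polynomial.X ^ N : Polynomial ℂ)) := by
          apply spectrum.subset_polynomial_aeval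
          exact ⟨μ, hmem, by simp⟩
        rw [map_pow, Polynomial.aeval_X, map_pow_comm, hDN] at h2
        have h0 : (0 : Matrix (Fin n) (Fin n) ℤ).map (fun i : ℤ => (i : ℂ)) = 0 :=
          Matrix.map_zero _ (by simp)
        rw [h0, spectrum.zero_eq] at h2
        exact (pow_eq_zero_iff (Nat.pos_iff_ne_zero.mp hN)).mp (Set.mem_singleton_iff.mp h2)
      have hset : {r : ℝ | ∃ μ : ℂ,
          ((D.map (fun i => (i : ℂ))).charpoly.IsRoot μ) ∧ r = ‖μ‖} = {0} := by
        ext r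
        simp only [Set.mem_setOf_eq, Set.mem_singleton_iff]
        constructor
        · rintro ⟨μ, hroot, rfl⟩
          rw [hsub μ hroot]
          simp
        · rintro rfl
          have hdeg : (0:WithBot ℕ) < (D.map (fun i => (i : ℂ))).charpoly.degree := by
            rw [Polynomial.degree_eq_natDegree (Matrix.charpoly_monic _).ne_zero]
            rw [Matrix.charpoly_natDegree_eq_dim]
            exact_mod_cast by simpa using hn
          obtain ⟨z, hz⟩ := Complex.exists_root hdeg
          exact ⟨z, hz, by rw [hsub z hz]; simp⟩
      rw [hset, csSup_singleton]
  · -- main case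
    push_neg at hnil
    have hn : 0 < n := by
      rcases Nat.eq_zero_or_pos n with h0 | h
      · exfalso
        apply hnil 1 one_pos
        subst h0
        ext i j
        exact i.elim0
      · exact h
    haveI : Nonempty (Fin n) := Fin.pos_iff_nonempty.mp hn
    haveI : CompleteSpace (Matrix (Fin n) (Fin n) ℂ) := FiniteDimensional.complete ℂ _
    obtain ⟨μ0, hμ0mem, hμ0max, hsp⟩ := exists_max_spectrum hn (D.map (fun i : ℤ => (i : ℂ)))
    set R : ℝ := ‖μ0‖ with hR
    have hspR : (spectralRadius ℂ (D.map (fun i : ℤ => (i : ℂ)))).toReal = R := by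
      rw [hsp, ENNReal.coe_toReal, coe_nnnorm]
    have hGel := spectrum.pow_nnnorm_pow_one_div_tendsto_nhds_spectralRadius
      (D.map (fun i : ℤ => (i : ℂ)))
    have hone_ne : (1 : Matrix (Fin n) (Fin n) ℤ) ≠ 0 := by
      intro h1
      have h2 : (1 : Matrix (Fin n) (Fin n) ℤ) ⟨0, hn⟩ ⟨0, hn⟩ = 0 := by rw [h1]; rfl
      rw [Matrix.one_apply_eq] at h2
      exact one_ne_zero h2
    have hpow_ne : ∀ k : ℕ, D ^ k ≠ 0 := by
      intro k
      rcases Nat.eq_zero_or_pos k with rfl | hk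
      · rw [pow_zero]; exact hone_ne
      · exact hnil k hk
    have hmn1 : ∀ k : ℕ, 1 ≤ mnorm (D ^ k) := by
      intro k
      rcases Nat.eq_zero_or_pos (mnorm (D ^ k)) with h | h
      · exact absurd (mnorm_eq_zero h) (hpow_ne k)
      · exact h
    have hne_top : spectralRadius ℂ (D.map (fun i : ℤ => (i : ℂ))) ≠ ⊤ := by
      rw [hsp]; exact ENNReal.coe_ne_top
    have hT' : Tendsto (fun k : ℕ => ((mnorm (D ^ k) : ℝ)) ^ (1/(k:ℝ))) atTop (𝓝 R) := by
      have hT := (ENNReal.tendsto_toReal hne_top).comp hGel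
      rw [hspR] at hT
      apply hT.congr
      intro k
      show (((‖(D.map (fun i : ℤ => (i : ℂ))) ^ k‖₊ : NNReal) : ENNReal) ^ (1/(k:ℝ))).toReal = _
      rw [map_pow_comm, nnnorm_intMatrix_map, ← ENNReal.toReal_rpow]
      norm_num
    have hR1 : (1:ℝ) ≤ R := by
      refine ge_of_tendsto' hT' fun k => ?_
      refine Real.one_le_rpow ?_ (by positivity)
      exact_mod_cast hmn1 k
    have hRpos : (0:ℝ) < R := lt_of_lt_of_le one_pos hR1
    have hlogT : Tendsto (fun k : ℕ => Real.log (mnorm (D ^ k)) / k) atTop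
        (𝓝 (Real.log R)) := by
      have hc := (Real.continuousAt_log hRpos.ne').tendsto.comp hT'
      apply hc.congr
      intro k
      show Real.log ((mnorm (D ^ k) : ℝ) ^ (1/(k:ℝ))) = _
      rw [Real.log_rpow (by exact_mod_cast hmn1 k)]
      ring
    -- word length side
    have hL1 : ∀ k, 1 ≤ Lk S (fun x => ofAdd (D.mulVec x.toAdd)) k := by
      intro k
      rcases Nat.eq_zero_or_pos (Lk S (fun x => ofAdd (D.mulVec x.toAdd)) k) with h | h
      · exfalso
        apply hpow_ne k
        apply matrix_eq_zero_of_S S hS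
        intro s hs
        have hwl : wordLength (S : Set (Multiplicative (Fin n → ℤ)))
            ((fun x : Multiplicative (Fin n → ℤ) => ofAdd (D.mulVec x.toAdd))^[k] s) = 0 := by
          refine Nat.le_zero.mp ?_
          rw [← h]
          exact Finset.le_sup (f := fun s : Multiplicative (Fin n → ℤ) =>
            wordLength (S : Set (Multiplicative (Fin n → ℤ)))
              ((fun x : Multiplicative (Fin n → ℤ) => ofAdd (D.mulVec x.toAdd))^[k] s)) hs
        have h1 := eq_one_of_wordLength_eq_zero hS hwl
        rw [phi_iterate] at h1
        have h2 := congrArg Multiplicative.toAdd h1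
        simpa using h2
      · exact h
    have hLpos : ∀ k, (0:ℝ) < ((Lk S (fun x => ofAdd (D.mulVec x.toAdd)) k : ℕ) : ℝ) :=
      fun k => by exact_mod_cast hL1 k
    have hc1 : 1 ≤ n * Cc S * Bc S := by
      by_contra hlt
      have hc0 : n * Cc S * Bc S = 0 := by omega
      have h1 := mnorm_le_Lk S hS D 1
      rw [hc0, zero_mul] at h1
      have h2 := hmn1 1
      omega
    set u : ℕ → ℝ := fun k => Real.log (Lk S (fun x => ofAdd (D.mulVec x.toAdd)) k) with hu
    have hsubadd : Subadditive u := by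
      intro m k
      have hmul := Lk_submul S hS D m k
      show Real.log _ ≤ Real.log _ + Real.log _
      calc Real.log (Lk S (fun x => ofAdd (D.mulVec x.toAdd)) (m + k))
          ≤ Real.log ((Lk S (fun x => ofAdd (D.mulVec x.toAdd)) m : ℝ)
              * (Lk S (fun x => ofAdd (D.mulVec x.toAdd)) k : ℝ)) := by
            apply Real.log_le_log (hLpos _)
            exact_mod_cast hmul
        _ = _ := Real.log_mul (hLpos m).ne' (hLpos k).ne'
    have hbdd : BddBelow (Set.range fun k : ℕ => u k / k) := by
      refine ⟨0, ?_⟩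
      rintro x ⟨k, rfl⟩
      exact div_nonneg (Real.log_nonneg (by exact_mod_cast hL1 k)) (Nat.cast_nonneg k)
    have hlim := hsubadd.tendsto_lim hbdd
    have hclog : (0:ℝ) ≤ Real.log (n * Cc S * Bc S : ℕ) :=
      Real.log_nonneg (by exact_mod_cast hc1)
    have hcpos : (0:ℝ) < ((n * Cc S * Bc S : ℕ) : ℝ) := by exact_mod_cast hc1
    have hub : ∀ k : ℕ, u k ≤ Real.log (n * Cc S * Bc S : ℕ)
        + Real.log (mnorm (D ^ k)) := by
      intro k
      have h1 := Lk_le_mnorm S hS D k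
      have hmpos : (0:ℝ) < (mnorm (D ^ k) : ℝ) := by exact_mod_cast hmn1 k
      calc u k ≤ Real.log (((n * Cc S * Bc S : ℕ) : ℝ) * (mnorm (D ^ k) : ℝ)) := by
            apply Real.log_le_log (hLpos _)
            exact_mod_cast h1
        _ = _ := Real.log_mul hcpos.ne' hmpos.ne'
    have hlb : ∀ k : ℕ, Real.log (mnorm (D ^ k))
        - Real.log (n * Cc S * Bc S : ℕ) ≤ u k := by
      intro k
      have h1 := mnorm_le_Lk S hS D k
      have hmpos : (0:ℝ) < (mnorm (D ^ k) : ℝ) := by exact_mod_cast hmn1 k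
      have h2 : Real.log (mnorm (D ^ k)) ≤ Real.log (n * Cc S * Bc S : ℕ) + u k := by
        calc Real.log (mnorm (D ^ k))
            ≤ Real.log (((n * Cc S * Bc S : ℕ) : ℝ)
                * (Lk S (fun x => ofAdd (D.mulVec x.toAdd)) k : ℝ)) := by
              apply Real.log_le_log hmpos
              exact_mod_cast h1
          _ = _ := Real.log_mul hcpos.ne' (hLpos k).ne'
      linarith
    have hsq : Tendsto (fun k : ℕ => u k / k) atTop (𝓝 (Real.log R)) := by
      have hlow : Tendsto (fun k : ℕ => Real.log (mnorm (D ^ k)) / k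
          - Real.log (n * Cc S * Bc S : ℕ) / k) atTop (𝓝 (Real.log R)) := by
        have := hlogT.sub (tendsto_const_div_atTop_nhds_zero_nat
          (Real.log (n * Cc S * Bc S : ℕ)))
        simpa using this
      have hhigh : Tendsto (fun k : ℕ => Real.log (mnorm (D ^ k)) / k
          + Real.log (n * Cc S * Bc S : ℕ) / k) atTop (𝓝 (Real.log R)) := by
        have := hlogT.add (tendsto_const_div_atTop_nhds_zero_nat
          (Real.log (n * Cc S * Bc S : ℕ)))
        simpa using this
      refine tendsto_of_tendsto_of_tendsto_of_le_of_le' hlow hhigh ?_ ?_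
      · filter_upwards [eventually_ge_atTop 1] with k hk
        have hkpos : (0:ℝ) < (k:ℝ) := by exact_mod_cast hk
        rw [← sub_div]
        exact (div_le_div_iff_of_pos_right hkpos).mpr (hlb k)
      · filter_upwards [eventually_ge_atTop 1] with k hk
        have hkpos : (0:ℝ) < (k:ℝ) := by exact_mod_cast hk
        rw [← add_div]
        refine (div_le_div_iff_of_pos_right hkpos).mpr ?_
        have := hub k
        linarith
    have hlimval : hsubadd.lim = Real.log R := tendsto_nhds_unique hlim hsq
    have hbdd2 : BddBelow (Set.range fun k : ℕ+ => u k / k) := by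
      refine ⟨0, ?_⟩
      rintro x ⟨k, rfl⟩
      exact div_nonneg (Real.log_nonneg (by exact_mod_cast hL1 k)) (Nat.cast_nonneg _)
    have hiInf_eq : (⨅ k : ℕ+, u k / k) = hsubadd.lim := by
      rw [Subadditive.lim, iInf]
      congr 1
      ext r
      constructor
      · rintro ⟨k, rfl⟩
        exact ⟨(k:ℕ), k.one_le, rfl⟩
      · rintro ⟨m, hm, rfl⟩
        exact ⟨⟨m, lt_of_lt_of_le zero_lt_one hm⟩, rfl⟩
    have hGRval : GR S (fun x => ofAdd (D.mulVec x.toAdd)) = Real.exp (⨅ k : ℕ+, u k / k) := by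
      unfold GR
      rw [Monotone.map_ciInf_of_continuousAt (Real.continuous_exp.continuousAt)
        Real.exp_monotone hbdd2]
      congr 1
      funext k
      rw [Real.rpow_def_of_pos (hLpos k), div_eq_mul_inv]
    rw [hGRval, hiInf_eq, hlimval, Real.exp_log hRpos]
    symm
    have hset : {r : ℝ | ∃ μ : ℂ,
        ((D.map (fun i => (i : ℂ))).charpoly.IsRoot μ) ∧ r = ‖μ‖}
        = norm '' (spectrum ℂ (D.map (fun i : ℤ => (i : ℂ)))) := by
      ext r
      simp only [Set.mem_setOf_eq, Set.mem_image]
      constructor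
      · rintro ⟨μ, hμ, rfl⟩
        exact ⟨μ, (charpoly_isRoot_iff _ μ).mp hμ, rfl⟩
      · rintro ⟨μ, hμ, rfl⟩
        exact ⟨μ, (charpoly_isRoot_iff _ μ).mpr hμ, rfl⟩
    rw [hset]
    apply IsGreatest.csSup_eq
    constructor
    · exact ⟨μ0, hμ0mem, rfl⟩
    · rintro r ⟨μ, hμ, rfl⟩
      exact hμ0max μ hμ
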